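/- Let l be an odd prime and q a prime with q ≡ 1 (mod l). Let m, m', s, s' be integers with 1 ≤ m,m',s,s' < l, m+s = l, m'+s' = l, and z ∈ F_q with z ≠ 0,1. Then for every positive integer k, the curves y^l = t^m(1-t)^s(1-zt)^m and y^l = t^{m'}(1-t)^{s'}(1-zt)^{m'} have the same number of projective points over F_{q^k}. -/

import Mathlib

open Set

section Aux
variable {K : Type*} [Field K] [Fintype K]

lemma ncard_shift (l : ℕ) (c d : K) (hd : d ≠ 0) :
    {y : K | y ^ l = c * d ^ l}.ncard = {y : K | y ^ l = c}.ncard := by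
  have himg : (fun y : K => y * d) '' {y : K | y ^ l = c} = {y : K | y ^ l = c * d ^ l} := by
    ext y
    simp only [Set.mem_image, Set.mem_setOf_eq]
    constructor
    · rintro ⟨x, hx, rfl⟩; rw [mul_pow, hx]
    · intro hy
      refine ⟨y / d, ?_, div_mul_cancel₀ y hd⟩
      rw [div_pow, hy, mul_div_assoc, div_self (pow_ne_zero _ hd), mul_one]
  rw [← himg, Set.ncard_image_of_injective _ (mul_left_injective₀ hd)]

lemma ncard_le_pow (l : ℕ) (hl : l.Prime) (c : K) (j : ℕ) (hj : Nat.Coprime j l) :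
    {y : K | y ^ l = c}.ncard ≤ {y : K | y ^ l = c ^ j}.ncard := by
  have hinj : Set.InjOn (fun y : K => y ^ j) {y : K | y ^ l = c} := by
    intro y1 h1 y2 h2 h
    simp only [Set.mem_setOf_eq] at h1 h2 h
    by_cases hc : c = 0
    · subst hc
      have e1 : y1 = 0 := pow_eq_zero_iff hl.ne_zero |>.mp h1
      have e2 : y2 = 0 := pow_eq_zero_iff hl.ne_zero |>.mp h2
      rw [e1, e2]
    · have hy2 : y2 ≠ 0 := fun h0 => hc (by rw [← h2, h0, zero_pow hl.ne_zero])
      have hu : (y1 / y2) ^ l = 1 := by rw [div_pow, h1, h2, div_self hc]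
      have huj : (y1 / y2) ^ j = 1 := by
        rw [div_pow, h, div_self (pow_ne_zero _ hy2)]
      have hord : orderOf (y1 / y2) ∣ Nat.gcd j l :=
        Nat.dvd_gcd (orderOf_dvd_of_pow_eq_one huj) (orderOf_dvd_of_pow_eq_one hu)
      rw [hj] at hord
      have : y1 / y2 = 1 := orderOf_eq_one_iff.mp (Nat.dvd_one.mp hord)
      field_simp at this
      exact this
  calc {y : K | y ^ l = c}.ncard
      = ((fun y : K => y ^ j) '' {y : K | y ^ l = c}).ncard :=
        (Set.ncard_image_of_injOn hinj).symm
    _ ≤ {y : K | y ^ l = c ^ j}.ncard := by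
        apply Set.ncard_le_ncard _ (Set.toFinite _)
        rintro y ⟨x, hx, rfl⟩
        simp only [Set.mem_setOf_eq] at hx ⊢
        rw [← pow_mul, mul_comm, pow_mul, hx]

lemma ncard_mod (l : ℕ) (hl : 0 < l) (c : K) (hc : c ≠ 0) (n : ℕ) :
    {y : K | y ^ l = c ^ n}.ncard = {y : K | y ^ l = c ^ (n % l)}.ncard := by
  conv_lhs => rw [← Nat.mod_add_div n l, pow_add, mul_comm l (n / l), pow_mul]
  exact ncard_shift l _ _ (pow_ne_zero _ hc)

lemma ncard_pow_le (l : ℕ) (hl : l.Prime) (c : K) (hc : c ≠ 0) (n n' : ℕ)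
    (hn : ¬ l ∣ n) (hn' : ¬ l ∣ n') :
    {y : K | y ^ l = c ^ n}.ncard ≤ {y : K | y ^ l = c ^ n'}.ncard := by
  haveI : Fact l.Prime := ⟨hl⟩
  have hnz : (n : ZMod l) ≠ 0 := by
    rwa [Ne, ZMod.natCast_eq_zero_iff]
  have hn'z : (n' : ZMod l) ≠ 0 := by
    rwa [Ne, ZMod.natCast_eq_zero_iff]
  set u : ZMod l := (n : ZMod l)⁻¹ * n' with hu
  have hune : u ≠ 0 := mul_ne_zero (inv_ne_zero hnz) hn'z
  set j : ℕ := u.val with hjdef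
  have hjcast : (j : ZMod l) = u := ZMod.natCast_val u |>.trans (ZMod.cast_id _ _)
  have hj : Nat.Coprime j l := by
    have := ZMod.val_coe_unit_coprime (Units.mk0 u hune)
    simpa using this
  have hmod : (n * j) % l = n' % l := by
    have : ((n * j : ℕ) : ZMod l) = ((n' : ℕ) : ZMod l) := by
      push_cast
      rw [hjcast, hu, ← mul_assoc, mul_inv_cancel₀ hnz, one_mul]
    rwa [ZMod.natCast_eq_natCast_iff] at this
  calc {y : K | y ^ l = c ^ n}.ncard
      ≤ {y : K | y ^ l = (c ^ n) ^ j}.ncard := ncard_le_pow l hl _ j hj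
    _ = {y : K | y ^ l = c ^ (n * j)}.ncard := by rw [← pow_mul]
    _ = {y : K | y ^ l = c ^ ((n * j) % l)}.ncard := ncard_mod l hl.pos c hc _
    _ = {y : K | y ^ l = c ^ (n' % l)}.ncard := by rw [hmod]
    _ = {y : K | y ^ l = c ^ n'}.ncard := (ncard_mod l hl.pos c hc _).symm

lemma ncard_pow_eq (l : ℕ) (hl : l.Prime) (c : K) (hc : c ≠ 0) (n n' : ℕ)
    (hn : ¬ l ∣ n) (hn' : ¬ l ∣ n') :
    {y : K | y ^ l = c ^ n}.ncard = {y : K | y ^ l = c ^ n'}.ncard :=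
  le_antisymm (ncard_pow_le l hl c hc n n' hn hn') (ncard_pow_le l hl c hc n' n hn' hn)

end Aux

theorem curves_same_point_count (l p : ℕ) (hl : l.Prime) (hlodd : Odd l) (hp : p.Prime)
    (hcong : p % l = 1) (m m' s s' : ℕ)
    (hm : 1 ≤ m) (hm' : 1 ≤ m') (hs : 1 ≤ s) (hs' : 1 ≤ s')
    (hml : m < l) (hm'l : m' < l) (hsl : s < l) (hs'l : s' < l)
    (hms : m + s = l) (hm's' : m' + s' = l)
    (k : ℕ) (hk : 0 < k) (K : Type*) [Field K] [Fintype K]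
    (hK : Fintype.card K = p ^ k) (z : K) (hzF : z ^ p = z) (hz0 : z ≠ 0) (hz1 : z ≠ 1) :
    (1 + ∑ t : K, {y : K | y ^ l = t ^ m * (1 - t) ^ s * (1 - z * t) ^ m}.ncard) =
      (1 + ∑ t : K, {y : K | y ^ l = t ^ m' * (1 - t) ^ s' * (1 - z * t) ^ m'}.ncard) := by
  congr 1
  apply Finset.sum_congr rfl
  intro t _
  by_cases ht : t = 1
  · subst ht
    have e : ∀ mm ss : ℕ, 1 ≤ ss → (1:K) ^ mm * (1 - 1) ^ ss * (1 - z * 1) ^ mm = 0 := by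
      intro mm ss hss
      rw [sub_self, zero_pow (by omega : ss ≠ 0), mul_zero, zero_mul]
    rw [e m s hs, e m' s' hs']
  · have h1t : (1 : K) - t ≠ 0 := sub_ne_zero.mpr (Ne.symm ht)
    set g : K := t * (1 - z * t) / (1 - t) with hg
    have key : ∀ mm ss : ℕ, mm + ss = l →
        t ^ mm * (1 - t) ^ ss * (1 - z * t) ^ mm = g ^ mm * (1 - t) ^ l := by
      intro mm ss h
      rw [← h, hg]
      field_simp
      rw [div_pow, pow_add, ← mul_assoc, div_mul_cancel₀ _ (pow_ne_zero _ h1t), mul_pow]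
      ring
    rw [key m s hms, key m' s' hm's']
    by_cases hgz : g = 0
    · rw [hgz, zero_pow (by omega : m ≠ 0), zero_pow (by omega : m' ≠ 0)]
    · rw [ncard_shift l (g ^ m) (1 - t) h1t, ncard_shift l (g ^ m') (1 - t) h1t]
      exact ncard_pow_eq l hl g hgz m m'
        (fun h => absurd (Nat.le_of_dvd (by omega) h) (by omega))
        (fun h => absurd (Nat.le_of_dvd (by omega) h) (by omega))
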